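/- arXiv:2205.01985 — 3 statements merged into one kernel-verified Lean document; each statement's English description precedes it below -/
import Mathlib

section
/- Let G=(V,E) be a finite simple undirected graph, and let β_e > 1 for all e ∈ E and 0 < λ_v ≤ 1 for all v ∈ V. Set p_e = (1/2)(1 − 1/β_e) for each e ∈ E. Then (∏_{e∈E} β_e) · Z_wrc(G; 2p, λ) = Z_Ising(G; β, λ), where 2p denotes the parameters (2p_e)_{e∈E}. -/
open Finset
open scoped Classical

noncomputable section

variable {V : Type*} [Fintype V] [DecidableEq V]

/-- The vertex set of the connected component of `v` in the graph `(V, S)`. -/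
def compOf (S : Finset (Sym2 V)) (v : V) : Finset V :=
  Finset.univ.filter fun u => (SimpleGraph.fromEdgeSet (↑S : Set (Sym2 V))).Reachable v u

/-- `κ(V,S)`: the set of vertex sets of connected components of the graph `(V, S)`. -/
def kappa (S : Finset (Sym2 V)) : Finset (Finset V) :=
  Finset.univ.image (compOf S)

/-- `∏_{C ∈ κ(V,S)} (1 + ∏_{u ∈ C} λ_u)`. -/
def clusterProd (S : Finset (Sym2 V)) (lam : V → ℝ) : ℝ :=
  ∏ C ∈ kappa S, (1 + ∏ u ∈ C, lam u)

/-- Weight of an edge subset `S ⊆ E₀` in the weighted random cluster model. -/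
def wtWRC (E₀ : Finset (Sym2 V)) (q : Sym2 V → ℝ) (lam : V → ℝ) (S : Finset (Sym2 V)) : ℝ :=
  (∏ e ∈ S, q e) * (∏ f ∈ E₀ \ S, (1 - q f)) * clusterProd S lam

/-- Partition function of the weighted random cluster model. -/
def ZWRC (E₀ : Finset (Sym2 V)) (q : Sym2 V → ℝ) (lam : V → ℝ) : ℝ :=
  ∑ S ∈ E₀.powerset, wtWRC E₀ q lam S

/-- The weighted random cluster distribution. -/
def piWRC (E₀ : Finset (Sym2 V)) (q : Sym2 V → ℝ) (lam : V → ℝ) (S : Finset (Sym2 V)) : ℝ :=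
  wtWRC E₀ q lam S / ZWRC E₀ q lam

/-- The monochromatic edges of a spin configuration `σ`. -/
def monoEdges (E₀ : Finset (Sym2 V)) (σ : V → Bool) : Finset (Sym2 V) :=
  E₀.filter fun e => (e.map σ).IsDiag

/-- Weight of a spin configuration in the Ising model. -/
def wtIsing (E₀ : Finset (Sym2 V)) (β : Sym2 V → ℝ) (lam : V → ℝ) (σ : V → Bool) : ℝ :=
  (∏ e ∈ monoEdges E₀ σ, β e) * ∏ v : V, (if σ v then lam v else 1)

/-- Ising partition function. -/
def ZIsing (E₀ : Finset (Sym2 V)) (β : Sym2 V → ℝ) (lam : V → ℝ) : ℝ :=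
  ∑ σ : V → Bool, wtIsing E₀ β lam σ

/-- Ising Gibbs distribution. -/
def piIsing (E₀ : Finset (Sym2 V)) (β : Sym2 V → ℝ) (lam : V → ℝ) (σ : V → Bool) : ℝ :=
  wtIsing E₀ β lam σ / ZIsing E₀ β lam

/-- Vertices of odd degree in the graph `(V, S)`. -/
def oddVerts (S : Finset (Sym2 V)) : Finset V :=
  Finset.univ.filter fun v => Odd (S.filter fun e => v ∈ e).card

/-- Weight of an edge subset in the subgraph-world model. -/
def wtSG (E₀ : Finset (Sym2 V)) (p : Sym2 V → ℝ) (η : V → ℝ) (S : Finset (Sym2 V)) : ℝ :=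
  (∏ e ∈ S, p e) * (∏ f ∈ E₀ \ S, (1 - p f)) * ∏ v ∈ oddVerts S, η v

/-- Subgraph-world partition function. -/
def ZSG (E₀ : Finset (Sym2 V)) (p : Sym2 V → ℝ) (η : V → ℝ) : ℝ :=
  ∑ S ∈ E₀.powerset, wtSG E₀ p η S

/-- Subgraph-world distribution. -/
def piSG (E₀ : Finset (Sym2 V)) (p : Sym2 V → ℝ) (η : V → ℝ) (S : Finset (Sym2 V)) : ℝ :=
  wtSG E₀ p η S / ZSG E₀ p η

/-- The transformation `P_{I→R}` from Ising configurations to edge subsets. -/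
def PIR (E₀ : Finset (Sym2 V)) (β : Sym2 V → ℝ) (σ : V → Bool) (S : Finset (Sym2 V)) : ℝ :=
  if S ⊆ monoEdges E₀ σ then
    (∏ e ∈ S, (1 - (β e)⁻¹)) * ∏ f ∈ monoEdges E₀ σ \ S, (β f)⁻¹
  else 0

/-- The transformation `P_{R→I}` from edge subsets to Ising configurations. -/
def PRI (E₀ : Finset (Sym2 V)) (lam : V → ℝ) (S : Finset (Sym2 V)) (σ : V → Bool) : ℝ :=
  if S ⊆ monoEdges E₀ σ then
    ∏ C ∈ kappa S, ((∏ v ∈ C, if σ v then lam v else 1) / (1 + ∏ v ∈ C, lam v))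
  else 0

/-- Swendsen-Wang dynamics for the Ising model: `P_{I→R} ⬝ P_{R→I}`. -/
def PSWIsing (E₀ : Finset (Sym2 V)) (β : Sym2 V → ℝ) (lam : V → ℝ) (σ τ : V → Bool) : ℝ :=
  ∑ S ∈ E₀.powerset, PIR E₀ β σ S * PRI E₀ lam S τ

/-- Swendsen-Wang dynamics for the weighted random cluster model: `P_{R→I} ⬝ P_{I→R}`. -/
def PSWwrc (E₀ : Finset (Sym2 V)) (β : Sym2 V → ℝ) (lam : V → ℝ)
    (S S' : Finset (Sym2 V)) : ℝ :=
  ∑ σ : V → Bool, PRI E₀ lam S σ * PIR E₀ β σ S'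

/-- Lazy edge-flipping (Metropolis) dynamics for a distribution `pi` on subsets of `E₀`. -/
def PEF (E₀ : Finset (Sym2 V)) (pi : Finset (Sym2 V) → ℝ) (x y : Finset (Sym2 V)) : ℝ :=
  if x = y then
    1 - (1 / (2 * (E₀.card : ℝ))) * ∑ e ∈ E₀, min 1 (pi (symmDiff x {e}) / pi x)
  else if (symmDiff x y).card = 1 then
    (1 / (2 * (E₀.card : ℝ))) * min 1 (pi y / pi x)
  else 0

/-- Variance of `f` with respect to a distribution `pi` supported on `states`. -/
def varOn {α : Type*} (states : Finset α) (pi f : α → ℝ) : ℝ :=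
  (∑ x ∈ states, pi x * f x ^ 2) - (∑ x ∈ states, pi x * f x) ^ 2

/-- Dirichlet form of a Markov kernel `P` with stationary distribution `pi` on `states`. -/
def dirichletOn {α : Type*} (states : Finset α) (pi : α → ℝ) (P : α → α → ℝ) (f : α → ℝ) : ℝ :=
  ∑ x ∈ states, pi x * f x * (f x - ∑ y ∈ states, P x y * f y)

/-- Spectral gap of a reversible Markov kernel `P` with stationary distribution `pi`. -/
def gapOn {α : Type*} (states : Finset α) (pi : α → ℝ) (P : α → α → ℝ) : ℝ :=
  sInf ((fun f : α → ℝ => dirichletOn states pi P f / varOn states pi f) ''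
    {f | varOn states pi f ≠ 0})

/-- Total variation distance between two distributions on `states`. -/
def dTV {α : Type*} (states : Finset α) (μ ν : α → ℝ) : ℝ :=
  (1 / 2) * ∑ z ∈ states, |μ z - ν z|

/-- `t`-step transition probabilities of the Markov kernel `P` on state space `states`. -/
def kpow {α : Type*} (states : Finset α) (P : α → α → ℝ) : ℕ → α → α → ℝ
  | 0 => fun x y => if x = y then 1 else 0
  | (t + 1) => fun x y => ∑ z ∈ states, P x z * kpow states P t z y


/-! ### Auxiliary lemmas -/

lemma mem_compOf {S : Finset (Sym2 V)} {v u : V} :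
    u ∈ compOf S v ↔ (SimpleGraph.fromEdgeSet (↑S : Set (Sym2 V))).Reachable v u := by
  simp [compOf]

lemma self_mem_compOf (S : Finset (Sym2 V)) (v : V) : v ∈ compOf S v :=
  mem_compOf.mpr (SimpleGraph.Reachable.refl v)

lemma compOf_eq_of_reachable {S : Finset (Sym2 V)} {u v : V}
    (h : (SimpleGraph.fromEdgeSet (↑S : Set (Sym2 V))).Reachable u v) :
    compOf S u = compOf S v := by
  ext w
  simp only [mem_compOf]
  exact ⟨fun h2 => h.symm.trans h2, fun h2 => h.trans h2⟩

lemma sigma_const {E₀ S : Finset (Sym2 V)} {σ : V → Bool}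
    (hS : S ⊆ monoEdges E₀ σ) {u v : V}
    (h : (SimpleGraph.fromEdgeSet (↑S : Set (Sym2 V))).Reachable u v) :
    σ u = σ v := by
  obtain ⟨w⟩ := h
  induction w with
  | nil => rfl
  | @cons a b c hadj w ih =>
    have hm : s(a, b) ∈ S := ((SimpleGraph.fromEdgeSet_adj _).mp hadj).1
    have hd : (Sym2.map σ s(a, b)).IsDiag := (Finset.mem_filter.mp (hS hm)).2
    rw [Sym2.map_pair_eq, Sym2.mk_isDiag_iff] at hd
    exact hd.trans ih

lemma fiber_eq {S : Finset (Sym2 V)} {C : Finset V} (hC : C ∈ kappa S) :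
    Finset.univ.filter (fun v => compOf S v = C) = C := by
  obtain ⟨w, -, rfl⟩ := Finset.mem_image.mp hC
  ext v
  simp only [Finset.mem_filter, Finset.mem_univ, true_and, mem_compOf]
  constructor
  · intro h
    exact mem_compOf.mp (h ▸ self_mem_compOf S v)
  · intro h
    exact (compOf_eq_of_reachable h).symm

lemma compOf_eq_of_mem {S : Finset (Sym2 V)} {C : Finset V} (hC : C ∈ kappa S)
    {v : V} (hv : v ∈ C) : compOf S v = C := by
  have := fiber_eq hC
  rw [← this] at hv
  exact (Finset.mem_filter.mp hv).2

lemma sum_powerset_subset {α β : Type*} [DecidableEq α] [AddCommMonoid β]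
    {M E : Finset α} (hME : M ⊆ E) (f : Finset α → β) :
    ∑ S ∈ M.powerset, f S = ∑ S ∈ E.powerset, (if S ⊆ M then f S else 0) := by
  rw [← Finset.sum_filter]
  congr 1
  ext S
  simp only [Finset.mem_filter, Finset.mem_powerset]
  exact ⟨fun h => ⟨h.trans hME, h⟩, fun h => h.2⟩

lemma sum_sigma_eq_clusterProd (E₀ S : Finset (Sym2 V)) (hSE : S ⊆ E₀) (lam : V → ℝ) :
    (∑ σ : V → Bool, if S ⊆ monoEdges E₀ σ then ∏ v : V, (if σ v then lam v else 1) else 0)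
      = clusterProd S lam := by
  classical
  rw [← Finset.sum_filter]
  set Ψ : ({C // C ∈ kappa S} → Bool) → (V → Bool) :=
    fun τ v => τ ⟨compOf S v, Finset.mem_image_of_mem _ (Finset.mem_univ v)⟩ with hΨ
  have hΨval : ∀ (τ : {C // C ∈ kappa S} → Bool) (C : {C // C ∈ kappa S}) (v : V),
      v ∈ C.1 → Ψ τ v = τ C := by
    rintro τ ⟨C, hC⟩ v hv
    show τ _ = τ _
    congr 1
    exact Subtype.ext (compOf_eq_of_mem hC hv)
  have hmain : ∀ τ : {C // C ∈ kappa S} → Bool,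
      (∏ v : V, (if Ψ τ v then lam v else 1)) =
        ∏ C : {C // C ∈ kappa S}, (if τ C then ∏ v ∈ C.1, lam v else 1) := by
    intro τ
    rw [← Finset.prod_fiberwise_of_maps_to
      (fun v _ => Finset.mem_image_of_mem (compOf S) (Finset.mem_univ v))
      (fun v => if Ψ τ v then lam v else 1)]
    rw [show Finset.image (compOf S) Finset.univ = kappa S from rfl]
    rw [Finset.univ_eq_attach, ← Finset.prod_attach (kappa S)
      (fun C => ∏ v ∈ Finset.univ.filter (fun v => compOf S v = C),
        (if Ψ τ v then lam v else 1))]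
    refine Finset.prod_congr rfl ?_
    rintro ⟨C, hC⟩ -
    rw [fiber_eq hC]
    rcases hb : τ ⟨C, hC⟩ with _ | _
    · rw [if_neg (by simp [hb])]
      refine Finset.prod_eq_one fun v hv => ?_
      rw [hΨval τ ⟨C, hC⟩ v hv, hb, if_neg (by simp)]
    · rw [if_pos (by simp [hb])]
      refine Finset.prod_congr rfl fun v hv => ?_
      rw [hΨval τ ⟨C, hC⟩ v hv, hb, if_pos rfl]
  have hbij : ∑ σ ∈ Finset.univ.filter (fun σ : V → Bool => S ⊆ monoEdges E₀ σ),
      (∏ v : V, (if σ v then lam v else 1)) =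
      ∑ τ : {C // C ∈ kappa S} → Bool, ∏ v : V, (if Ψ τ v then lam v else 1) := by
    refine (Finset.sum_bij (fun τ _ => Ψ τ) ?_ ?_ ?_ ?_).symm
    · -- maps into the filter
      intro τ _
      simp only [Finset.mem_filter, Finset.mem_univ, true_and]
      intro e he
      induction e using Sym2.ind with
      | _ a b =>
        refine Finset.mem_filter.mpr ⟨hSE he, ?_⟩
        rw [Sym2.map_pair_eq, Sym2.mk_isDiag_iff]
        rcases eq_or_ne a b with rfl | hab
        · rfl
        · have hadj : (SimpleGraph.fromEdgeSet (↑S : Set (Sym2 V))).Adj a b :=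
            (SimpleGraph.fromEdgeSet_adj _).mpr ⟨by exact_mod_cast he, hab⟩
          have hcc : compOf S a = compOf S b := compOf_eq_of_reachable hadj.reachable
          show τ _ = τ _
          congr 1
          exact Subtype.ext hcc
    · -- injective
      intro τ₁ _ τ₂ _ h
      funext C
      obtain ⟨C, hC⟩ := C
      obtain ⟨w, -, rfl⟩ := Finset.mem_image.mp hC
      have h1 := hΨval τ₁ ⟨compOf S w, hC⟩ w (self_mem_compOf S w)
      have h2 := hΨval τ₂ ⟨compOf S w, hC⟩ w (self_mem_compOf S w)
      rw [← h1, ← h2]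
      exact congrFun h w
    · -- surjective
      intro σ hσ
      have hσ' : S ⊆ monoEdges E₀ σ := (Finset.mem_filter.mp hσ).2
      refine ⟨fun C => σ (Finset.mem_image.mp C.2).choose, Finset.mem_univ _, ?_⟩
      funext v
      show σ _ = σ v
      set C : {C // C ∈ kappa S} :=
        ⟨compOf S v, Finset.mem_image_of_mem _ (Finset.mem_univ v)⟩ with hCdef
      obtain ⟨-, hw⟩ := (Finset.mem_image.mp C.2).choose_spec
      have : v ∈ compOf S (Finset.mem_image.mp C.2).choose := by
        rw [hw]; exact self_mem_compOf S v
      exact sigma_const hσ' (mem_compOf.mp this)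
    · intro τ _; rfl
  rw [hbij]
  have : ∀ τ : {C // C ∈ kappa S} → Bool,
      (∏ v : V, (if Ψ τ v then lam v else 1)) =
        ∏ C : {C // C ∈ kappa S}, (if τ C then ∏ v ∈ C.1, lam v else 1) := hmain
  calc ∑ τ : {C // C ∈ kappa S} → Bool, ∏ v : V, (if Ψ τ v then lam v else 1)
      = ∑ τ : {C // C ∈ kappa S} → Bool,
          ∏ C : {C // C ∈ kappa S}, (if τ C then ∏ v ∈ C.1, lam v else 1) := by
        exact Finset.sum_congr rfl fun τ _ => hmain τ
    _ = ∏ C : {C // C ∈ kappa S}, ∑ b : Bool, (if b then ∏ v ∈ C.1, lam v else 1) := by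
        rw [← Fintype.piFinset_univ]
        exact (Finset.prod_univ_sum (fun _ => (Finset.univ : Finset Bool))
          (fun (C : {C // C ∈ kappa S}) (b : Bool) =>
            if b then ∏ v ∈ (C : Finset V), lam v else 1)).symm
    _ = ∏ C : {C // C ∈ kappa S}, (1 + ∏ v ∈ C.1, lam v) := by
        refine Finset.prod_congr rfl fun C _ => ?_
        rw [Fintype.sum_bool, if_pos rfl, if_neg (by simp)]
        ring
    _ = clusterProd S lam := by
        rw [clusterProd, ← Finset.prod_attach (kappa S) (fun C => 1 + ∏ v ∈ C, lam v),
          Finset.univ_eq_attach]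

/-- Equivalence of the Ising and weighted random cluster partition functions:
`(∏_e β_e) · Z_wrc(G; 2p, λ) = Z_Ising(G; β, λ)` where `p_e = (1/2)(1 − 1/β_e)`. -/
theorem ising_eq_wrc {V : Type*} [Fintype V] [DecidableEq V]
    (G : SimpleGraph V) [DecidableRel G.Adj]
    (β : Sym2 V → ℝ) (lam : V → ℝ) (p : Sym2 V → ℝ)
    (hβ : ∀ e ∈ G.edgeFinset, 1 < β e)
    (hlam : ∀ v : V, 0 < lam v ∧ lam v ≤ 1)
    (hp : ∀ e ∈ G.edgeFinset, p e = (1 / 2) * (1 - (β e)⁻¹)) :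
    (∏ e ∈ G.edgeFinset, β e) * ZWRC G.edgeFinset (fun e => 2 * p e) lam =
      ZIsing G.edgeFinset β lam := by
  classical
  set E := G.edgeFinset with hE
  have hβ0 : ∀ e ∈ E, β e ≠ 0 := fun e he => ne_of_gt (lt_trans one_pos (hβ e he))
  -- Right-hand side computation
  have hRHS : ZIsing E β lam =
      ∑ S ∈ E.powerset, (∏ e ∈ S, (β e - 1)) * clusterProd S lam := by
    rw [ZIsing]
    have step1 : ∀ σ : V → Bool, wtIsing E β lam σ =
        ∑ S ∈ E.powerset, (if S ⊆ monoEdges E σ then (∏ e ∈ S, (β e - 1)) else 0) *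
          ∏ v : V, (if σ v then lam v else 1) := by
      intro σ
      rw [wtIsing]
      have hexp : (∏ e ∈ monoEdges E σ, β e) =
          ∑ S ∈ (monoEdges E σ).powerset, ∏ e ∈ S, (β e - 1) := by
        have : (∏ e ∈ monoEdges E σ, β e) = ∏ e ∈ monoEdges E σ, ((β e - 1) + 1) := by
          refine Finset.prod_congr rfl fun e _ => by ring
        rw [this, Finset.prod_add]
        refine Finset.sum_congr rfl fun S _ => ?_
        rw [Finset.prod_const_one, mul_one]
      have hmono : monoEdges E σ ⊆ E := Finset.filter_subset _ _
      rw [hexp, sum_powerset_subset hmono, Finset.sum_mul]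
    rw [Finset.sum_congr rfl fun σ _ => step1 σ, Finset.sum_comm]
    refine Finset.sum_congr rfl fun S hS => ?_
    have hSE : S ⊆ E := Finset.mem_powerset.mp hS
    rw [← sum_sigma_eq_clusterProd E S hSE lam, Finset.mul_sum]
    refine Finset.sum_congr rfl fun σ _ => ?_
    split_ifs with h
    · ring
    · ring
  -- Left-hand side computation
  rw [hRHS, ZWRC, Finset.mul_sum]
  refine Finset.sum_congr rfl fun S hS => ?_
  have hSE : S ⊆ E := Finset.mem_powerset.mp hS
  rw [wtWRC]
  have hsplit : (∏ e ∈ E, β e) = (∏ e ∈ E \ S, β e) * ∏ e ∈ S, β e :=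
    (Finset.prod_sdiff hSE).symm
  have h1 : (∏ e ∈ S, β e) * (∏ e ∈ S, 2 * p e) = ∏ e ∈ S, (β e - 1) := by
    rw [← Finset.prod_mul_distrib]
    refine Finset.prod_congr rfl fun e he => ?_
    have heE := hSE he
    rw [hp e heE]
    have hne := hβ0 e heE
    have h2p : (2:ℝ) * (1/2 * (1 - (β e)⁻¹)) = 1 - (β e)⁻¹ := by ring
    rw [h2p, mul_sub, mul_one, mul_inv_cancel₀ hne]
  have h2 : (∏ e ∈ E \ S, β e) * (∏ f ∈ E \ S, (1 - 2 * p f)) = 1 := by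
    rw [← Finset.prod_mul_distrib]
    refine Finset.prod_eq_one fun e he => ?_
    have heE := (Finset.mem_sdiff.mp he).1
    rw [hp e heE]
    have hne := hβ0 e heE
    have h2p : (1:ℝ) - 2 * (1/2 * (1 - (β e)⁻¹)) = (β e)⁻¹ := by ring
    rw [h2p, mul_inv_cancel₀ hne]
  calc (∏ e ∈ E, β e) * ((∏ e ∈ S, 2 * p e) * (∏ f ∈ E \ S, (1 - 2 * p f)) * clusterProd S lam)
      = ((∏ e ∈ S, β e) * (∏ e ∈ S, 2 * p e)) *
        ((∏ e ∈ E \ S, β e) * (∏ f ∈ E \ S, (1 - 2 * p f))) * clusterProd S lam := by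
        rw [hsplit]; ring
    _ = (∏ e ∈ S, (β e - 1)) * clusterProd S lam := by rw [h1, h2, mul_one]

end
end

section
/- Let G=(V,E) be a finite simple undirected graph, and let β_e > 1 for all e ∈ E and 0 < λ_v ≤ 1 for all v ∈ V. Set p_e = (1/2)(1 − 1/β_e) for each e ∈ E and η_v = (1−λ_v)/(1+λ_v) for each v ∈ V. Then Z_Ising(G; β, λ) = (∏_{v∈V}(1+λ_v)) · (∏_{e∈E} β_e) · Z_sg(G; p, η). -/
open Finset
open scoped Classical

noncomputable section

variable {V : Type*} [Fintype V] [DecidableEq V]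

private def sgn (σ : V → Bool) (v : V) : ℝ := if σ v then -1 else 1

private def edgeSign (σ : V → Bool) (e : Sym2 V) : ℝ := if (e.map σ).IsDiag then 1 else -1

private lemma sum_prod_bool (g : V → Bool → ℝ) :
    ∑ σ : V → Bool, ∏ v, g v (σ v) = ∏ v, (g v true + g v false) := by
  rw [← Fintype.piFinset_univ, ← Finset.prod_univ_sum]
  simp

private lemma edgeSign_eq (σ : V → Bool) (e : Sym2 V) (he : ¬ e.IsDiag) :
    edgeSign σ e = ∏ v ∈ Finset.univ.filter (· ∈ e), sgn σ v := by
  induction e with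
  | _ u v =>
    rw [Sym2.mk_isDiag_iff] at he
    have hfil : (Finset.univ.filter (· ∈ s(u,v))) = {u, v} := by
      ext w; simp [Sym2.mem_iff]
    rw [hfil, Finset.prod_pair he]
    cases hu : σ u <;> cases hv : σ v <;>
      simp [edgeSign, sgn, Sym2.map_pair_eq, Sym2.mk_isDiag_iff, hu, hv] <;> norm_num

private lemma sgn_pow (σ : V → Bool) (v : V) (k : ℕ) :
    sgn σ v ^ k = if Odd k then sgn σ v else 1 := by
  rcases Nat.even_or_odd k with hk | hk
  · rw [if_neg (by simpa [Nat.not_odd_iff_even] using hk)]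
    cases h : σ v
    · simp [sgn, h]
    · simp only [sgn, h, if_true]; exact hk.neg_one_pow
  · rw [if_pos hk]
    cases h : σ v
    · simp [sgn, h]
    · simp only [sgn, h, if_true]; exact hk.neg_one_pow

private lemma prod_edgeSign (σ : V → Bool) (S : Finset (Sym2 V)) (hS : ∀ e ∈ S, ¬ e.IsDiag) :
    ∏ e ∈ S, edgeSign σ e = ∏ v ∈ oddVerts S, sgn σ v := by
  calc ∏ e ∈ S, edgeSign σ e
      = ∏ e ∈ S, ∏ v ∈ Finset.univ.filter (· ∈ e), sgn σ v :=
        Finset.prod_congr rfl fun e he => edgeSign_eq σ e (hS e he)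
    _ = ∏ e ∈ S, ∏ v : V, (if v ∈ e then sgn σ v else 1) :=
        Finset.prod_congr rfl fun e _ => by rw [Finset.prod_filter]
    _ = ∏ v : V, ∏ e ∈ S, (if v ∈ e then sgn σ v else 1) := Finset.prod_comm
    _ = ∏ v : V, sgn σ v ^ (S.filter fun e => v ∈ e).card := by
        refine Finset.prod_congr rfl fun v _ => ?_
        rw [← Finset.prod_filter, Finset.prod_const]
    _ = ∏ v : V, (if Odd (S.filter fun e => v ∈ e).card then sgn σ v else 1) :=
        Finset.prod_congr rfl fun v _ => sgn_pow σ v _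
    _ = ∏ v ∈ oddVerts S, sgn σ v := by rw [oddVerts, Finset.prod_filter]

private lemma sum_sgn_prod (W U : Finset V) :
    ∑ σ : V → Bool, (∏ v ∈ W, sgn σ v) * ∏ v ∈ U, sgn σ v =
      if W = U then (2:ℝ) ^ Fintype.card V else 0 := by
  have key : ∀ σ : V → Bool, (∏ v ∈ W, sgn σ v) * ∏ v ∈ U, sgn σ v
      = ∏ v : V, ((if v ∈ W then (if σ v then (-1:ℝ) else 1) else 1) *
          (if v ∈ U then (if σ v then (-1:ℝ) else 1) else 1)) := by
    intro σ
    rw [Finset.prod_mul_distrib, Finset.prod_ite_mem, Finset.prod_ite_mem,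
      Finset.univ_inter, Finset.univ_inter]
    rfl
  simp_rw [key]
  rw [sum_prod_bool (fun v b => (if v ∈ W then (if b then (-1:ℝ) else 1) else 1) *
      (if v ∈ U then (if b then (-1:ℝ) else 1) else 1))]
  have hfac : ∀ v : V,
      ((if v ∈ W then (-1:ℝ) else 1) * (if v ∈ U then (-1:ℝ) else 1) +
        (if v ∈ W then (1:ℝ) else 1) * (if v ∈ U then (1:ℝ) else 1)) =
      (if (v ∈ W ↔ v ∈ U) then (2:ℝ) else 0) := by
    intro v
    by_cases hw : v ∈ W <;> by_cases hu : v ∈ U <;> simp [hw, hu] <;> norm_num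
  simp only [Bool.false_eq_true, if_true, if_false]
  rw [Finset.prod_congr rfl fun v _ => hfac v]
  by_cases h : W = U
  · subst h
    rw [if_pos rfl]
    simp [Finset.prod_const, Finset.card_univ]
  · rw [if_neg h]
    obtain ⟨v, hv⟩ : ∃ v, ¬(v ∈ W ↔ v ∈ U) := by
      by_contra hc
      push_neg at hc
      exact h (Finset.ext fun v => hc v)
    exact Finset.prod_eq_zero (Finset.mem_univ v) (if_neg hv)


/-- Equivalence of the Ising and subgraph-world partition functions:
`Z_Ising(G; β, λ) = (∏_v (1+λ_v)) (∏_e β_e) Z_sg(G; p, η)`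
where `p_e = (1/2)(1 − 1/β_e)` and `η_v = (1−λ_v)/(1+λ_v)`. -/
theorem ising_eq_sg {V : Type*} [Fintype V] [DecidableEq V]
    (G : SimpleGraph V) [DecidableRel G.Adj]
    (β : Sym2 V → ℝ) (lam : V → ℝ) (p : Sym2 V → ℝ) (η : V → ℝ)
    (hβ : ∀ e ∈ G.edgeFinset, 1 < β e)
    (hlam : ∀ v : V, 0 < lam v ∧ lam v ≤ 1)
    (hp : ∀ e ∈ G.edgeFinset, p e = (1 / 2) * (1 - (β e)⁻¹))
    (hη : ∀ v : V, η v = (1 - lam v) / (1 + lam v)) :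
    ZIsing G.edgeFinset β lam =
      (∏ v : V, (1 + lam v)) * (∏ e ∈ G.edgeFinset, β e) * ZSG G.edgeFinset p η := by
  classical
  have hnd : ∀ e ∈ G.edgeFinset, ¬ e.IsDiag := fun e he =>
    SimpleGraph.not_isDiag_of_mem_edgeSet G (SimpleGraph.mem_edgeFinset.mp he)
  set E₀ := G.edgeFinset with hE₀def
  set c : Sym2 V → ℝ := fun e => (β e - 1) / (β e + 1) with hc
  -- pointwise rewriting of the Ising weight
  have hwt : ∀ σ : V → Bool, wtIsing E₀ β lam σ =
      ((∏ e ∈ E₀, ((β e + 1) / 2)) * ∏ v : V, ((1 + lam v) / 2)) *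
        ((∏ e ∈ E₀, (c e * edgeSign σ e + 1)) * ∏ v : V, (η v * sgn σ v + 1)) := by
    intro σ
    have he : ∀ e ∈ E₀, (if (e.map σ).IsDiag then β e else 1) =
        ((β e + 1) / 2) * (c e * edgeSign σ e + 1) := by
      intro e heE
      have hβe := hβ e heE
      have h1 : β e + 1 ≠ 0 := by positivity
      by_cases hd : (e.map σ).IsDiag <;>
        simp only [edgeSign, hc, hd, if_true, if_false] <;> field_simp <;> ring
    have hv : ∀ v : V, (if σ v then lam v else 1) =
        ((1 + lam v) / 2) * (η v * sgn σ v + 1) := by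
      intro v
      have h0 := (hlam v).1
      have h1 : 1 + lam v ≠ 0 := by positivity
      rw [hη v]
      cases h : σ v <;> simp only [sgn, h, if_true, if_false, Bool.false_eq_true] <;>
        field_simp <;> ring
    unfold wtIsing monoEdges
    rw [Finset.prod_filter, Finset.prod_congr rfl he,
      Finset.prod_congr rfl fun v _ => hv v, Finset.prod_mul_distrib,
      Finset.prod_mul_distrib]
    ring
  -- expand the two products as sums over subsets
  have hexpE : ∀ σ : V → Bool, (∏ e ∈ E₀, (c e * edgeSign σ e + 1)) =
      ∑ S ∈ E₀.powerset, (∏ e ∈ S, c e) * ∏ e ∈ S, edgeSign σ e := by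
    intro σ
    rw [Finset.prod_add]
    exact Finset.sum_congr rfl fun S _ => by
      rw [Finset.prod_const_one, mul_one, Finset.prod_mul_distrib]
  have hexpV : ∀ σ : V → Bool, (∏ v : V, (η v * sgn σ v + 1)) =
      ∑ U ∈ (Finset.univ : Finset V).powerset, (∏ v ∈ U, η v) * ∏ v ∈ U, sgn σ v := by
    intro σ
    rw [Finset.prod_add]
    exact Finset.sum_congr rfl fun U _ => by
      rw [Finset.prod_const_one, mul_one, Finset.prod_mul_distrib]
  -- the main summation manipulation
  have hmain : ZIsing E₀ β lam =
      ((∏ e ∈ E₀, ((β e + 1) / 2)) * ∏ v : V, ((1 + lam v) / 2)) *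
        ∑ S ∈ E₀.powerset, (∏ e ∈ S, c e) *
          ((∏ v ∈ oddVerts S, η v) * (2 : ℝ) ^ Fintype.card V) := by
    unfold ZIsing
    rw [Finset.sum_congr rfl fun σ _ => hwt σ, ← Finset.mul_sum]
    congr 1
    calc ∑ σ : V → Bool,
          (∏ e ∈ E₀, (c e * edgeSign σ e + 1)) * ∏ v : V, (η v * sgn σ v + 1)
        = ∑ σ : V → Bool, ∑ S ∈ E₀.powerset, ∑ U ∈ (Finset.univ : Finset V).powerset,
            ((∏ e ∈ S, c e) * ∏ v ∈ U, η v) *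
              ((∏ e ∈ S, edgeSign σ e) * ∏ v ∈ U, sgn σ v) := by
          refine Finset.sum_congr rfl fun σ _ => ?_
          rw [hexpE σ, hexpV σ, Finset.sum_mul_sum]
          exact Finset.sum_congr rfl fun S _ => Finset.sum_congr rfl fun U _ => by ring
      _ = ∑ S ∈ E₀.powerset, ∑ U ∈ (Finset.univ : Finset V).powerset,
            ((∏ e ∈ S, c e) * ∏ v ∈ U, η v) *
              ∑ σ : V → Bool, (∏ e ∈ S, edgeSign σ e) * ∏ v ∈ U, sgn σ v := by
          rw [Finset.sum_comm]
          refine Finset.sum_congr rfl fun S _ => ?_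
          rw [Finset.sum_comm]
          exact Finset.sum_congr rfl fun U _ => (Finset.mul_sum _ _ _).symm
      _ = ∑ S ∈ E₀.powerset, ∑ U ∈ (Finset.univ : Finset V).powerset,
            ((∏ e ∈ S, c e) * ∏ v ∈ U, η v) *
              (if oddVerts S = U then (2 : ℝ) ^ Fintype.card V else 0) := by
          refine Finset.sum_congr rfl fun S hS => Finset.sum_congr rfl fun U _ => ?_
          have hSE := Finset.mem_powerset.mp hS
          rw [Finset.sum_congr rfl fun σ _ => by
              rw [prod_edgeSign σ S fun e he => hnd e (hSE he)],
            sum_sgn_prod]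
      _ = ∑ S ∈ E₀.powerset, (∏ e ∈ S, c e) *
            ((∏ v ∈ oddVerts S, η v) * (2 : ℝ) ^ Fintype.card V) := by
          refine Finset.sum_congr rfl fun S _ => ?_
          rw [Finset.sum_eq_single_of_mem (oddVerts S)
            (Finset.mem_powerset.mpr (Finset.subset_univ _))]
          · rw [if_pos rfl]; ring
          · intro U _ hne
            rw [if_neg (fun h => hne h.symm), mul_zero]
  rw [hmain]
  unfold ZSG wtSG
  rw [Finset.mul_sum, Finset.mul_sum]
  refine Finset.sum_congr rfl fun S hS => ?_
  have hSE : S ⊆ E₀ := Finset.mem_powerset.mp hS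
  -- vertex prefactor
  have hB : (∏ v : V, ((1 + lam v) / 2)) * (2 : ℝ) ^ Fintype.card V
      = ∏ v : V, (1 + lam v) := by
    rw [Finset.prod_div_distrib, Finset.prod_const, Finset.card_univ,
      div_mul_cancel₀]
    positivity
  -- edge prefactor
  have hA : (∏ e ∈ E₀, ((β e + 1) / 2)) * (∏ e ∈ S, c e)
      = (∏ e ∈ E₀, β e) * ((∏ e ∈ S, p e) * ∏ f ∈ E₀ \ S, (1 - p f)) := by
    have h1 : ∀ e ∈ S, (β e + 1) / 2 * c e = β e * p e := by
      intro e heS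
      have heE := hSE heS
      have hβe := hβ e heE
      have hβ0 : β e ≠ 0 := by positivity
      have hβ1 : β e + 1 ≠ 0 := by positivity
      rw [hp e heE, hc]
      field_simp
    have h2 : ∀ e ∈ E₀ \ S, (β e + 1) / 2 = β e * (1 - p e) := by
      intro e heD
      have heE := (Finset.mem_sdiff.mp heD).1
      have hβe := hβ e heE
      have hβ0 : β e ≠ 0 := by positivity
      rw [hp e heE]
      field_simp
      ring
    calc (∏ e ∈ E₀, ((β e + 1) / 2)) * (∏ e ∈ S, c e)
        = ((∏ e ∈ E₀ \ S, ((β e + 1) / 2)) * ∏ e ∈ S, ((β e + 1) / 2)) *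
            ∏ e ∈ S, c e := by rw [Finset.prod_sdiff hSE]
      _ = (∏ e ∈ E₀ \ S, ((β e + 1) / 2)) * ∏ e ∈ S, ((β e + 1) / 2 * c e) := by
          rw [Finset.prod_mul_distrib]; ring
      _ = (∏ e ∈ E₀ \ S, (β e * (1 - p e))) * ∏ e ∈ S, (β e * p e) := by
          rw [Finset.prod_congr rfl h2, Finset.prod_congr rfl h1]
      _ = (∏ e ∈ E₀, β e) * ((∏ e ∈ S, p e) * ∏ f ∈ E₀ \ S, (1 - p f)) := by
          rw [Finset.prod_mul_distrib, Finset.prod_mul_distrib,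
            ← Finset.prod_sdiff hSE (f := β)]
          ring
  calc (∏ e ∈ E₀, ((β e + 1) / 2)) * (∏ v : V, ((1 + lam v) / 2)) *
        ((∏ e ∈ S, c e) * ((∏ v ∈ oddVerts S, η v) * (2 : ℝ) ^ Fintype.card V))
      = ((∏ e ∈ E₀, ((β e + 1) / 2)) * (∏ e ∈ S, c e)) *
          (((∏ v : V, ((1 + lam v) / 2)) * (2 : ℝ) ^ Fintype.card V) *
            ∏ v ∈ oddVerts S, η v) := by ring
    _ = _ := by rw [hA, hB]; ring


end
end

section
/- Let G=(V,E) be a finite simple undirected graph, let 0 < p_e < 1/2 for all e ∈ E, let 0 < λ_v ≤ 1 for all v ∈ V, and set η_v = (1−λ_v)/(1+λ_v). Then for every R ⊆ E, π_wrc(R) = Σ_{S⊆R} π_sg(S) · ∏_{e∈R\S} (p_e/(1−p_e)) · ∏_{f∈E\R} (1 − p_f/(1−p_f)), where π_sg is the subgraph-world distribution with parameters (p, η) and π_wrc is the weighted random cluster distribution with edge parameters (2p_e)_{e∈E} and vertex weights λ. Equivalently: if S is sampled from the subgraph-world model (G; p, η) and each edge e ∈ E\S is then independently added with probability p_e/(1−p_e),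 the resulting random edge set has distribution π_wrc(G; 2p, λ). -/
open Finset
open scoped Classical

noncomputable section

variable {V : Type*} [Fintype V] [DecidableEq V]

namespace SGWRC

variable (S : Finset (Sym2 V))

lemma mem_compOf {u v : V} :
    u ∈ compOf S v ↔ (SimpleGraph.fromEdgeSet (↑S : Set (Sym2 V))).Reachable v u := by
  simp [compOf]

lemma self_mem_compOf (v : V) : v ∈ compOf S v := (mem_compOf S).2 (SimpleGraph.Reachable.refl v)

lemma compOf_eq_iff {u v : V} :
    compOf S u = compOf S v ↔ (SimpleGraph.fromEdgeSet (↑S : Set (Sym2 V))).Reachable u v := by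
  constructor
  · intro h
    have := self_mem_compOf S u
    rw [h, mem_compOf] at this
    exact this.symm
  · intro h
    ext x
    rw [mem_compOf, mem_compOf]
    exact ⟨fun h' => h.symm.trans h', fun h' => h.trans h'⟩

lemma compOf_mem_kappa (v : V) : compOf S v ∈ kappa S :=
  Finset.mem_image_of_mem _ (Finset.mem_univ v)

lemma kappa_disjoint {C C' : Finset V} (hC : C ∈ kappa S) (hC' : C' ∈ kappa S) (h : C ≠ C') :
    Disjoint C C' := by
  obtain ⟨u, -, rfl⟩ := Finset.mem_image.1 hC
  obtain ⟨v, -, rfl⟩ := Finset.mem_image.1 hC'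
  rw [Finset.disjoint_left]
  intro x hx hx'
  rw [mem_compOf] at hx hx'
  exact h ((compOf_eq_iff S).2 (hx.trans hx'.symm))

lemma univ_eq_biUnion_kappa : (Finset.univ : Finset V) = (kappa S).biUnion id := by
  ext v
  simp only [Finset.mem_univ, Finset.mem_biUnion, id, true_iff]
  exact ⟨compOf S v, compOf_mem_kappa S v, self_mem_compOf S v⟩

lemma prod_kappa (f : V → ℝ) : ∏ v, f v = ∏ C ∈ kappa S, ∏ v ∈ C, f v := by
  rw [univ_eq_biUnion_kappa S]
  exact Finset.prod_biUnion (fun C hC C' hC' h => kappa_disjoint S hC hC' h)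

end SGWRC

namespace SGWRC

lemma sigma_const_of_reachable {σ : V → Bool} {R : Finset (Sym2 V)}
    (hσ : ∀ e ∈ R, (Sym2.map σ e).IsDiag) {u v : V}
    (h : (SimpleGraph.fromEdgeSet (↑R : Set (Sym2 V))).Reachable u v) : σ u = σ v := by
  obtain ⟨w⟩ := h
  induction w with
  | nil => rfl
  | cons h p ih =>
    rw [SimpleGraph.fromEdgeSet_adj] at h
    have := hσ _ h.1
    rw [Sym2.map_pair_eq, Sym2.mk_isDiag_iff] at this
    exact this.trans ih

/-- a representative of a component -/
def rep (R : Finset (Sym2 V)) (C : Finset V) (hC : C ∈ kappa R) : V :=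
  (Finset.mem_image.1 hC).choose

lemma compOf_rep (R : Finset (Sym2 V)) (C : Finset V) (hC : C ∈ kappa R) :
    compOf R (rep R C hC) = C := (Finset.mem_image.1 hC).choose_spec.2

lemma rep_mem (R : Finset (Sym2 V)) (C : Finset V) (hC : C ∈ kappa R) :
    rep R C hC ∈ C := by
  have := self_mem_compOf R (rep R C hC)
  rwa [compOf_rep R C hC] at this

lemma pi_apply_congr {R : Finset (Sym2 V)} (p : ∀ C ∈ kappa R, Bool) {C C' : Finset V}
    (h : C = C') (hC : C ∈ kappa R) : p C hC = p C' (h ▸ hC) := by subst h; rfl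

lemma compOf_eq_of_mem {R : Finset (Sym2 V)} {C : Finset V} (hC : C ∈ kappa R) {v : V}
    (hv : v ∈ C) : compOf R v = C := by
  obtain ⟨u, -, rfl⟩ := Finset.mem_image.1 hC
  exact (compOf_eq_iff R).2 ((mem_compOf R).1 hv).symm

lemma sum_good (R : Finset (Sym2 V)) (hR : ∀ e ∈ R, ¬ e.IsDiag) (w : V → Bool → ℝ) :
    ∑ σ ∈ (Finset.univ : Finset (V → Bool)).filter
        (fun σ => ∀ e ∈ R, (Sym2.map σ e).IsDiag),
      ∏ v, w v (σ v) = ∏ C ∈ kappa R, ∑ b : Bool, ∏ v ∈ C, w v b := by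
  rw [Finset.prod_sum (kappa R) (fun _ => (Finset.univ : Finset Bool))
    (fun C b => ∏ v ∈ C, w v b)]
  refine Finset.sum_bij' (fun σ hσ => fun C hC => σ (rep R C hC))
    (fun p hp => fun v => p (compOf R v) (compOf_mem_kappa R v)) ?_ ?_ ?_ ?_ ?_
  · intro σ hσ
    exact Finset.mem_pi.2 fun C hC => Finset.mem_univ _
  · intro p hp
    simp only [Finset.mem_filter, Finset.mem_univ, true_and]
    intro e he
    induction e using Sym2.ind with
    | _ a b =>
      have hab : a ≠ b := fun h => hR _ he (by rw [h]; exact Sym2.mk_isDiag_iff.2 rfl)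
      have hadj : (SimpleGraph.fromEdgeSet (↑R : Set (Sym2 V))).Adj a b :=
        (SimpleGraph.fromEdgeSet_adj _).2 ⟨by exact_mod_cast he, hab⟩
      have hcomp : compOf R a = compOf R b := (compOf_eq_iff R).2 hadj.reachable
      rw [Sym2.map_pair_eq, Sym2.mk_isDiag_iff]
      show p (compOf R a) _ = p (compOf R b) _
      exact pi_apply_congr p hcomp _
  · intro σ hσ
    funext v
    have hrep : rep R (compOf R v) (compOf_mem_kappa R v) ∈ compOf R v :=
      rep_mem R _ _
    have hreach := (mem_compOf R).1 hrep
    simp only [Finset.mem_filter, Finset.mem_univ, true_and] at hσ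
    exact (sigma_const_of_reachable hσ hreach).symm
  · intro p hp
    funext C hC
    show p (compOf R (rep R C hC)) _ = p C hC
    exact pi_apply_congr p (compOf_rep R C hC) _
  · intro σ hσ
    rw [prod_kappa R (fun v => w v (σ v)), ← Finset.prod_attach (kappa R)]
    refine Finset.prod_congr rfl fun x hx => ?_
    refine Finset.prod_congr rfl fun v hv => ?_
    simp only [Finset.mem_filter, Finset.mem_univ, true_and] at hσ
    congr 1
    have hvC : compOf R v = ↑x := compOf_eq_of_mem x.2 hv
    have hrep : rep R (↑x : Finset V) x.2 ∈ compOf R v := by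
      rw [hvC]; exact rep_mem R _ _
    exact sigma_const_of_reachable hσ ((mem_compOf R).1 hrep)

def sgn (b : Bool) : ℝ := if b then 1 else -1

def eps (σ : V → Bool) (e : Sym2 V) : ℝ := if (e.map σ).IsDiag then 1 else -1

lemma sgn_sq (b : Bool) : sgn b * sgn b = 1 := by cases b <;> simp [sgn]

lemma prod_symmDiff_sgn {A B : Finset V} (g : V → ℝ) (hg : ∀ v, g v * g v = 1) :
    ∏ v ∈ symmDiff A B, g v = (∏ v ∈ A, g v) * ∏ v ∈ B, g v := by
  have h2 : Disjoint (symmDiff A B) (A ∩ B) := by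
    rw [Finset.disjoint_left]
    intro v hv hv'
    rw [Finset.mem_symmDiff] at hv
    rw [Finset.mem_inter] at hv'
    tauto
  have h1 : symmDiff A B ∪ A ∩ B = A ∪ B := by
    ext v
    simp only [Finset.mem_union, Finset.mem_symmDiff, Finset.mem_inter]
    tauto
  have h3 : (∏ v ∈ A ∩ B, g v) * (∏ v ∈ A ∩ B, g v) = 1 := by
    rw [← Finset.prod_mul_distrib]
    exact Finset.prod_eq_one fun v _ => hg v
  calc ∏ v ∈ symmDiff A B, g v
      = (∏ v ∈ symmDiff A B, g v) * ((∏ v ∈ A ∩ B, g v) * (∏ v ∈ A ∩ B, g v)) := by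
        rw [h3, mul_one]
    _ = ((∏ v ∈ A ∪ B, g v) * (∏ v ∈ A ∩ B, g v)) := by
        rw [← mul_assoc, ← Finset.prod_union h2, h1]
    _ = (∏ v ∈ A, g v) * ∏ v ∈ B, g v := Finset.prod_union_inter

lemma oddVerts_insert {e : Sym2 V} {S : Finset (Sym2 V)} (he : e ∉ S) :
    oddVerts (insert e S) = symmDiff (oddVerts S) (Finset.univ.filter (· ∈ e)) := by
  ext v
  simp only [oddVerts, Finset.mem_symmDiff, Finset.mem_filter, Finset.mem_univ, true_and]
  by_cases hv : v ∈ e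
  · have : (insert e S).filter (fun f => v ∈ f) = insert e (S.filter (fun f => v ∈ f)) := by
      rw [Finset.filter_insert, if_pos hv]
    rw [this, Finset.card_insert_of_notMem (fun h => he (Finset.mem_filter.1 h).1),
      Nat.odd_add_one, Nat.not_odd_iff_even, ← Nat.not_odd_iff_even]
    tauto
  · have : (insert e S).filter (fun f => v ∈ f) = S.filter (fun f => v ∈ f) := by
      rw [Finset.filter_insert, if_neg hv]
    rw [this]
    simp [hv]

lemma prod_filter_mem_sgn (σ : V → Bool) (e : Sym2 V) (he : ¬ e.IsDiag) :
    ∏ v ∈ Finset.univ.filter (· ∈ e), sgn (σ v) = eps σ e := by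
  induction e using Sym2.ind with
  | _ a b =>
    have hab : a ≠ b := by simpa [Sym2.mk_isDiag_iff] using he
    have hfil : Finset.univ.filter (· ∈ (s(a, b) : Sym2 V)) = {a, b} := by
      ext v; simp [Sym2.mem_iff]
    rw [hfil, Finset.prod_pair hab]
    cases h1 : σ a <;> cases h2 : σ b <;>
      simp [sgn, eps, Sym2.map_pair_eq, Sym2.mk_isDiag_iff, h1, h2]

lemma prod_sgn_odd (σ : V → Bool) (S : Finset (Sym2 V)) :
    (∀ e ∈ S, ¬ e.IsDiag) → ∏ v ∈ oddVerts S, sgn (σ v) = ∏ e ∈ S, eps σ e := by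
  induction S using Finset.induction_on with
  | empty => intro _; simp [oddVerts]
  | @insert e S he ih =>
    intro hS
    rw [Finset.prod_insert he, ← ih (fun f hf => hS f (Finset.mem_insert_of_mem hf)),
      oddVerts_insert he, prod_symmDiff_sgn _ (fun v => sgn_sq (σ v)),
      prod_filter_mem_sgn σ e (hS e (Finset.mem_insert_self e S)), mul_comm]

lemma sum_bool_w (lam : V → ℝ) (C : Finset V) :
    ∑ b : Bool, ∏ v ∈ C, (if b then (1:ℝ) else lam v) = 1 + ∏ v ∈ C, lam v := by
  rw [Fintype.sum_bool]
  simp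

lemma key (R : Finset (Sym2 V)) (hR : ∀ e ∈ R, ¬ e.IsDiag) (lam η : V → ℝ)
    (hlam : ∀ v, 0 < lam v) (hη : ∀ v, η v = (1 - lam v) / (1 + lam v)) :
    (∏ v, (1 + lam v)) * ∑ S ∈ R.powerset, ∏ v ∈ oddVerts S, η v
      = 2 ^ R.card * clusterProd R lam := by
  classical
  set w : V → Bool → ℝ := fun v b => if b then 1 else lam v with hw
  have hpos : ∀ v, (0:ℝ) < 1 + lam v := fun v => by have := hlam v; linarith
  have step1 : ∀ S : Finset (Sym2 V),
      (∏ v, (1 + lam v)) * ∏ v ∈ oddVerts S, η v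
        = ∑ σ : V → Bool, (∏ v, w v (σ v)) * ∏ v ∈ oddVerts S, sgn (σ v) := by
    intro S
    have h1 : ∀ σ : V → Bool, (∏ v, w v (σ v)) * ∏ v ∈ oddVerts S, sgn (σ v)
        = ∏ v, (w v (σ v) * (if v ∈ oddVerts S then sgn (σ v) else 1)) := by
      intro σ
      rw [Finset.prod_mul_distrib]
      congr 1
      rw [Finset.prod_ite_mem, Finset.univ_inter]
    simp_rw [h1]
    rw [← Fintype.piFinset_univ, ← Finset.prod_univ_sum (fun _ => (Finset.univ : Finset Bool))
      (fun v b => w v b * if v ∈ oddVerts S then sgn b else 1)]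
    have h2 : ∀ v : V, (∑ b : Bool, (w v b * if v ∈ oddVerts S then sgn b else 1))
        = (1 + lam v) * (if v ∈ oddVerts S then η v else 1) := by
      intro v
      rw [Fintype.sum_bool]
      by_cases hv : v ∈ oddVerts S
      · simp only [hv, if_true, hw, sgn]
        rw [hη v]
        have h9 : (1 + lam v) * ((1 - lam v) / (1 + lam v)) = 1 - lam v := by
          rw [mul_div_assoc']
          exact mul_div_cancel_left₀ _ (hpos v).ne'
        rw [h9]
        simp only [Bool.false_eq_true, if_false, if_true]
        ring
      · simp [hv, hw]
    calc (∏ v, (1 + lam v)) * ∏ v ∈ oddVerts S, η v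
        = ∏ v, ((1 + lam v) * (if v ∈ oddVerts S then η v else 1)) := by
          rw [Finset.prod_mul_distrib, Finset.prod_ite_mem, Finset.univ_inter]
      _ = ∏ v, ∑ b : Bool, (w v b * if v ∈ oddVerts S then sgn b else 1) :=
          (Finset.prod_congr rfl fun v _ => (h2 v).symm)
  -- main computation
  have stepA : ∀ σ : V → Bool,
      ∑ S ∈ R.powerset, ∏ v ∈ oddVerts S, sgn (σ v) = ∏ e ∈ R, (eps σ e + 1) := by
    intro σ
    rw [Finset.prod_add]
    refine Finset.sum_congr rfl fun S hS => ?_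
    rw [Finset.prod_const_one, mul_one]
    exact prod_sgn_odd σ S fun e he => hR e (Finset.mem_powerset.1 hS he)
  calc (∏ v, (1 + lam v)) * ∑ S ∈ R.powerset, ∏ v ∈ oddVerts S, η v
      = ∑ S ∈ R.powerset, ((∏ v, (1 + lam v)) * ∏ v ∈ oddVerts S, η v) := Finset.mul_sum _ _ _
    _ = ∑ S ∈ R.powerset, ∑ σ : V → Bool, (∏ v, w v (σ v)) * ∏ v ∈ oddVerts S, sgn (σ v) :=
        Finset.sum_congr rfl fun S _ => step1 S
    _ = ∑ σ : V → Bool, ∑ S ∈ R.powerset, (∏ v, w v (σ v)) * ∏ v ∈ oddVerts S, sgn (σ v) :=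
        Finset.sum_comm
    _ = ∑ σ : V → Bool, (∏ v, w v (σ v)) * ∏ e ∈ R, (eps σ e + 1) := by
        refine Finset.sum_congr rfl fun σ _ => ?_
        rw [← Finset.mul_sum, stepA σ]
    _ = ∑ σ ∈ (Finset.univ : Finset (V → Bool)).filter
          (fun σ => ∀ e ∈ R, (Sym2.map σ e).IsDiag),
          (∏ v, w v (σ v)) * ∏ e ∈ R, (eps σ e + 1) := by
        rw [← Finset.sum_filter_add_sum_filter_not (Finset.univ : Finset (V → Bool))
          (fun σ => ∀ e ∈ R, (Sym2.map σ e).IsDiag)]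
        have : ∀ σ ∈ (Finset.univ : Finset (V → Bool)).filter
            (fun σ => ¬ ∀ e ∈ R, (Sym2.map σ e).IsDiag),
            (∏ v, w v (σ v)) * ∏ e ∈ R, (eps σ e + 1) = 0 := by
          intro σ hσ
          simp only [Finset.mem_filter, Finset.mem_univ, true_and, not_forall] at hσ
          obtain ⟨e, he, hbad⟩ := hσ
          have : eps σ e + 1 = 0 := by simp [eps, hbad]
          rw [Finset.prod_eq_zero he this, mul_zero]
        rw [Finset.sum_eq_zero this, add_zero]
    _ = ∑ σ ∈ (Finset.univ : Finset (V → Bool)).filter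
          (fun σ => ∀ e ∈ R, (Sym2.map σ e).IsDiag),
          (2:ℝ) ^ R.card * ∏ v, w v (σ v) := by
        refine Finset.sum_congr rfl fun σ hσ => ?_
        simp only [Finset.mem_filter, Finset.mem_univ, true_and] at hσ
        have : ∏ e ∈ R, (eps σ e + 1) = 2 ^ R.card := by
          rw [Finset.prod_congr rfl (fun e he => by simp [eps, hσ e he, one_add_one_eq_two] : 
            ∀ e ∈ R, eps σ e + 1 = (2:ℝ)), Finset.prod_const]
        rw [this, mul_comm]
    _ = 2 ^ R.card * clusterProd R lam := by
        rw [← Finset.mul_sum, sum_good R hR w]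
        unfold clusterProd
        congr 1
        exact Finset.prod_congr rfl fun C _ => sum_bool_w lam C

lemma pointwise (E₀ R : Finset (Sym2 V)) (hRE : R ⊆ E₀) (hdiag : ∀ e ∈ E₀, ¬ e.IsDiag)
    (p : Sym2 V → ℝ) (hp : ∀ e ∈ E₀, 0 < p e ∧ p e < 1 / 2)
    (lam η : V → ℝ) (hlam : ∀ v, 0 < lam v) (hη : ∀ v, η v = (1 - lam v) / (1 + lam v)) :
    (∏ v, (1 + lam v)) * ∑ S ∈ R.powerset, wtSG E₀ p η S *
        (∏ e ∈ R \ S, p e / (1 - p e)) * (∏ f ∈ E₀ \ R, (1 - p f / (1 - p f)))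
      = wtWRC E₀ (fun e => 2 * p e) lam R := by
  have hpne : ∀ e ∈ E₀, (1 : ℝ) - p e ≠ 0 := by
    intro e he
    have := (hp e he).2
    intro h
    linarith
  have hterm : ∀ S ∈ R.powerset, wtSG E₀ p η S *
      (∏ e ∈ R \ S, p e / (1 - p e)) * (∏ f ∈ E₀ \ R, (1 - p f / (1 - p f)))
      = ((∏ e ∈ R, p e) * ∏ f ∈ E₀ \ R, (1 - 2 * p f)) * ∏ v ∈ oddVerts S, η v := by
    intro S hS
    have hSR : S ⊆ R := Finset.mem_powerset.1 hS
    have hsplit : E₀ \ S = (R \ S) ∪ (E₀ \ R) := by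
      ext e
      simp only [Finset.mem_sdiff, Finset.mem_union]
      constructor
      · rintro ⟨he, hs⟩
        by_cases hr : e ∈ R
        · exact Or.inl ⟨hr, hs⟩
        · exact Or.inr ⟨he, hr⟩
      · rintro (⟨hr, hs⟩ | ⟨he, hr⟩)
        · exact ⟨hRE hr, hs⟩
        · exact ⟨he, fun h => hr (hSR h)⟩
    have hdisj : Disjoint (R \ S) (E₀ \ R) := by
      rw [Finset.disjoint_left]
      intro e he he'
      exact (Finset.mem_sdiff.1 he').2 (Finset.mem_sdiff.1 he).1
    unfold wtSG
    rw [hsplit, Finset.prod_union hdisj]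
    have h1 : (∏ e ∈ R \ S, (1 - p e)) * ∏ e ∈ R \ S, (p e / (1 - p e))
        = ∏ e ∈ R \ S, p e := by
      rw [← Finset.prod_mul_distrib]
      refine Finset.prod_congr rfl fun e he => ?_
      have hne := hpne e (hRE (Finset.mem_sdiff.1 he).1)
      rw [mul_comm, div_mul_cancel₀ _ hne]
    have h2 : (∏ f ∈ E₀ \ R, (1 - p f)) * ∏ f ∈ E₀ \ R, (1 - p f / (1 - p f))
        = ∏ f ∈ E₀ \ R, (1 - 2 * p f) := by
      rw [← Finset.prod_mul_distrib]
      refine Finset.prod_congr rfl fun f hf => ?_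
      have hne := hpne f (Finset.mem_sdiff.1 hf).1
      rw [mul_sub, mul_one, mul_comm (1 - p f), div_mul_cancel₀ _ hne]
      ring
    have h3 : (∏ e ∈ S, p e) * ∏ e ∈ R \ S, p e = ∏ e ∈ R, p e := by
      rw [← Finset.prod_union (Finset.disjoint_sdiff), Finset.union_sdiff_of_subset hSR]
    calc (∏ e ∈ S, p e) * ((∏ e ∈ R \ S, (1 - p e)) * ∏ f ∈ E₀ \ R, (1 - p f)) *
          (∏ v ∈ oddVerts S, η v) * (∏ e ∈ R \ S, (p e / (1 - p e))) *
          (∏ f ∈ E₀ \ R, (1 - p f / (1 - p f)))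
        = (∏ e ∈ S, p e) * ((∏ e ∈ R \ S, (1 - p e)) * ∏ e ∈ R \ S, (p e / (1 - p e))) *
          ((∏ f ∈ E₀ \ R, (1 - p f)) * ∏ f ∈ E₀ \ R, (1 - p f / (1 - p f))) *
          (∏ v ∈ oddVerts S, η v) := by ring
      _ = ((∏ e ∈ R, p e) * ∏ f ∈ E₀ \ R, (1 - 2 * p f)) * ∏ v ∈ oddVerts S, η v := by
          rw [h1, h2, ← h3]
  rw [Finset.sum_congr rfl hterm, ← Finset.mul_sum, ← mul_assoc,
    mul_comm (∏ v, (1 + lam v)), mul_assoc,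
    SGWRC.key R (fun e he => hdiag e (hRE he)) lam η hlam hη]
  unfold wtWRC
  have h4 : ∏ e ∈ R, (2 * p e) = 2 ^ R.card * ∏ e ∈ R, p e := by
    rw [Finset.prod_mul_distrib, Finset.prod_const]
  rw [h4]
  ring

lemma Z_eq (E₀ : Finset (Sym2 V)) (hdiag : ∀ e ∈ E₀, ¬ e.IsDiag)
    (p : Sym2 V → ℝ) (hp : ∀ e ∈ E₀, 0 < p e ∧ p e < 1 / 2)
    (lam η : V → ℝ) (hlam : ∀ v, 0 < lam v) (hη : ∀ v, η v = (1 - lam v) / (1 + lam v)) :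
    ZWRC E₀ (fun e => 2 * p e) lam = (∏ v, (1 + lam v)) * ZSG E₀ p η := by
  unfold ZWRC
  have : ∀ R ∈ E₀.powerset, wtWRC E₀ (fun e => 2 * p e) lam R
      = (∏ v, (1 + lam v)) * ∑ S ∈ R.powerset, wtSG E₀ p η S *
        (∏ e ∈ R \ S, p e / (1 - p e)) * (∏ f ∈ E₀ \ R, (1 - p f / (1 - p f))) :=
    fun R hR => (pointwise E₀ R (Finset.mem_powerset.1 hR) hdiag p hp lam η hlam hη).symm
  rw [Finset.sum_congr rfl this, ← Finset.mul_sum]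
  congr 1
  have hfil : ∀ R ∈ E₀.powerset, R.powerset
      = E₀.powerset.filter (fun S => S ⊆ R) := by
    intro R hR
    ext S
    simp only [Finset.mem_powerset, Finset.mem_filter]
    exact ⟨fun h => ⟨h.trans (Finset.mem_powerset.1 hR), h⟩, fun h => h.2⟩
  calc ∑ R ∈ E₀.powerset, ∑ S ∈ R.powerset, wtSG E₀ p η S *
        (∏ e ∈ R \ S, p e / (1 - p e)) * (∏ f ∈ E₀ \ R, (1 - p f / (1 - p f)))
      = ∑ R ∈ E₀.powerset, ∑ S ∈ E₀.powerset, if S ⊆ R then wtSG E₀ p η S *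
        (∏ e ∈ R \ S, p e / (1 - p e)) * (∏ f ∈ E₀ \ R, (1 - p f / (1 - p f))) else 0 := by
        refine Finset.sum_congr rfl fun R hR => ?_
        rw [hfil R hR, Finset.sum_filter]
    _ = ∑ S ∈ E₀.powerset, wtSG E₀ p η S *
          ∑ R ∈ E₀.powerset.filter (fun R => S ⊆ R),
            (∏ e ∈ R \ S, p e / (1 - p e)) * (∏ f ∈ E₀ \ R, (1 - p f / (1 - p f))) := by
        rw [Finset.sum_comm]
        refine Finset.sum_congr rfl fun S hS => ?_
        rw [Finset.mul_sum, Finset.sum_filter]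
        refine Finset.sum_congr rfl fun R hR => ?_
        split_ifs with h
        · ring
        · rfl
    _ = ∑ S ∈ E₀.powerset, wtSG E₀ p η S := by
        refine Finset.sum_congr rfl fun S hS => ?_
        have hone : ∑ R ∈ E₀.powerset.filter (fun R => S ⊆ R),
            (∏ e ∈ R \ S, p e / (1 - p e)) * (∏ f ∈ E₀ \ R, (1 - p f / (1 - p f))) = 1 := by
          have hSE : S ⊆ E₀ := Finset.mem_powerset.1 hS
          have hbij : ∑ R ∈ E₀.powerset.filter (fun R => S ⊆ R),
              (∏ e ∈ R \ S, p e / (1 - p e)) * (∏ f ∈ E₀ \ R, (1 - p f / (1 - p f)))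
            = ∑ T ∈ (E₀ \ S).powerset,
              (∏ e ∈ T, p e / (1 - p e)) * (∏ f ∈ (E₀ \ S) \ T, (1 - p f / (1 - p f))) := by
            refine Finset.sum_bij' (fun R _ => R \ S) (fun T _ => S ∪ T) ?_ ?_ ?_ ?_ ?_
            · intro R hR
              simp only [Finset.mem_filter, Finset.mem_powerset] at hR
              exact Finset.mem_powerset.2 (Finset.sdiff_subset_sdiff hR.1 le_rfl)
            · intro T hT
              simp only [Finset.mem_powerset] at hT
              simp only [Finset.mem_filter, Finset.mem_powerset]
              exact ⟨Finset.union_subset hSE (hT.trans Finset.sdiff_subset),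
                Finset.subset_union_left⟩
            · intro R hR
              simp only [Finset.mem_filter, Finset.mem_powerset] at hR
              exact Finset.union_sdiff_of_subset hR.2
            · intro T hT
              simp only [Finset.mem_powerset] at hT
              refine Finset.union_sdiff_cancel_left ?_
              rw [Finset.disjoint_left]
              intro a ha ha'
              exact (Finset.mem_sdiff.1 (hT ha')).2 ha
            · intro R hR
              simp only [Finset.mem_filter, Finset.mem_powerset] at hR
              congr 1
              have : E₀ \ R = (E₀ \ S) \ (R \ S) := by
                ext e
                simp only [Finset.mem_sdiff]
                have h9 : e ∈ S → e ∈ R := fun h => hR.2 h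
                tauto
              rw [this]
          rw [hbij, ← Finset.prod_add]
          have : ∀ f ∈ E₀ \ S, p f / (1 - p f) + (1 - p f / (1 - p f)) = 1 := by
            intro f hf
            ring
          rw [Finset.prod_congr rfl this, Finset.prod_const_one]
        rw [hone, mul_one]
    _ = ZSG E₀ p η := rfl

lemma ZSG_pos (E₀ : Finset (Sym2 V))
    (p : Sym2 V → ℝ) (hp : ∀ e ∈ E₀, 0 < p e ∧ p e < 1 / 2)
    (lam η : V → ℝ) (hlam : ∀ v, 0 < lam v ∧ lam v ≤ 1)
    (hη : ∀ v, η v = (1 - lam v) / (1 + lam v)) :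
    0 < ZSG E₀ p η := by
  have hηnn : ∀ v, 0 ≤ η v := by
    intro v
    rw [hη v]
    have h1 := (hlam v).1
    have h2 := (hlam v).2
    apply div_nonneg <;> linarith
  refine Finset.sum_pos' (fun S hS => ?_) ⟨∅, Finset.empty_mem_powerset E₀, ?_⟩
  · have hSE := Finset.mem_powerset.1 hS
    unfold wtSG
    apply mul_nonneg
    apply mul_nonneg
    · exact Finset.prod_nonneg fun e he => (hp e (hSE he)).1.le
    · refine Finset.prod_nonneg fun f hf => ?_
      have := (hp f (Finset.mem_sdiff.1 hf).1).2
      linarith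
    · exact Finset.prod_nonneg fun v _ => hηnn v
  · unfold wtSG
    have hodd : oddVerts (∅ : Finset (Sym2 V)) = ∅ := by
      simp [oddVerts]
    rw [hodd]
    simp only [Finset.prod_empty, Finset.sdiff_empty, one_mul, mul_one]
    refine Finset.prod_pos fun f hf => ?_
    have := (hp f hf).2
    linarith

end SGWRC

/-- Coupling between the subgraph-world model `(G; p, η)` and the weighted random cluster
model `(G; 2p, λ)`: sampling `S` from the subgraph-world model and independently adding each
edge `e ∈ E \ S` with probability `p_e/(1−p_e)` yields a sample from `π_wrc(G; 2p, λ)`. -/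
theorem sg_wrc_coupling {V : Type*} [Fintype V] [DecidableEq V]
    (G : SimpleGraph V) [DecidableRel G.Adj]
    (p : Sym2 V → ℝ) (lam : V → ℝ) (η : V → ℝ)
    (hp : ∀ e ∈ G.edgeFinset, 0 < p e ∧ p e < 1 / 2)
    (hlam : ∀ v : V, 0 < lam v ∧ lam v ≤ 1)
    (hη : ∀ v : V, η v = (1 - lam v) / (1 + lam v)) :
    ∀ R ∈ G.edgeFinset.powerset,
      piWRC G.edgeFinset (fun e => 2 * p e) lam R =
        ∑ S ∈ R.powerset, piSG G.edgeFinset p η S *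
          (∏ e ∈ R \ S, p e / (1 - p e)) *
          (∏ f ∈ G.edgeFinset \ R, (1 - p f / (1 - p f))) := by
  intro R hR
  have hRE : R ⊆ G.edgeFinset := Finset.mem_powerset.1 hR
  have hdiag : ∀ e ∈ G.edgeFinset, ¬ e.IsDiag :=
    fun e he => SimpleGraph.not_isDiag_of_mem_edgeSet G (SimpleGraph.mem_edgeFinset.1 he)
  have hlam1 : ∀ v, 0 < lam v := fun v => (hlam v).1
  have hP : (0:ℝ) < ∏ v, (1 + lam v) :=
    Finset.prod_pos fun v _ => by have := (hlam v).1; linarith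
  have hZ := SGWRC.ZSG_pos G.edgeFinset p hp lam η hlam hη
  have hZeq := SGWRC.Z_eq G.edgeFinset hdiag p hp lam η hlam1 hη
  have hpt := SGWRC.pointwise G.edgeFinset R hRE hdiag p hp lam η hlam1 hη
  unfold piWRC
  rw [← hpt, hZeq, mul_div_mul_left _ _ hP.ne']
  unfold piSG
  rw [Finset.sum_div]
  refine Finset.sum_congr rfl fun S hS => ?_
  ring

end
end
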